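/- The fidelity between quantum states is monotone non-decreasing under completely positive trace-preserving maps: for any quantum channel ℛ and density matrices σ₀, σ₁, F(ℛ(σ₀), ℛ(σ₁)) ≥ F(σ₀, σ₁). -/

import Mathlib

open scoped Matrix ComplexOrder

/-- Square root of a Hermitian matrix via the spectral theorem (junk value `0` otherwise). -/
noncomputable def msqrt {n : ℕ} (A : Matrix (Fin n) (Fin n) ℂ) : Matrix (Fin n) (Fin n) ℂ :=
  if h : A.IsHermitian then
    (h.eigenvectorUnitary : Matrix (Fin n) (Fin n) ℂ) *
      Matrix.diagonal (fun i => (Real.sqrt (h.eigenvalues i) : ℂ)) *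
      (h.eigenvectorUnitary : Matrix (Fin n) (Fin n) ℂ)ᴴ
  else 0

/-- Quantum fidelity `F(ρ,σ) = Tr √(√ρ σ √ρ)`. -/
noncomputable def fidelity {n : ℕ} (ρ σ : Matrix (Fin n) (Fin n) ℂ) : ℝ :=
  (msqrt (msqrt ρ * σ * msqrt ρ)).trace.re

/-- Von Neumann entropy `S(ρ) = -Tr(ρ log ρ)` via eigenvalues (junk value `0` if not Hermitian);
note `Real.log 0 = 0` so `0 log 0 = 0`. -/
noncomputable def vnEntropy {n : ℕ} (ρ : Matrix (Fin n) (Fin n) ℂ) : ℝ :=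
  if h : ρ.IsHermitian then -∑ i, (h.eigenvalues i) * Real.log (h.eigenvalues i) else 0

/-- Outer product `|ψ⟩⟨ψ|`. -/
noncomputable def proj {n : ℕ} (ψ : Fin n → ℂ) : Matrix (Fin n) (Fin n) ℂ :=
  Matrix.of fun i j => ψ i * star (ψ j)

/-- Inner product `⟨ψ|φ⟩`. -/
noncomputable def qInner {n : ℕ} (ψ φ : Fin n → ℂ) : ℂ := ∑ i, star (ψ i) * φ i

open scoped MatrixOrder in
lemma msqrt_eq {n : ℕ} {A : Matrix (Fin n) (Fin n) ℂ} (hA : A.PosSemidef) :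
    msqrt A = CFC.sqrt A := by
  rw [msqrt, dif_pos hA.1, CFC.sqrt_eq_cfc, cfc_nnreal_eq_real _ A hA.nonneg, hA.1.cfc_eq,
    Matrix.IsHermitian.cfc, Unitary.conjStarAlgAut_apply, Matrix.star_eq_conjTranspose]
  congr 2
  congr 1
  funext i
  exact congrArg Complex.ofReal (Real.sqrt.eq_1 _)

open scoped MatrixOrder in
lemma msqrt_posSemidef {n : ℕ} {A : Matrix (Fin n) (Fin n) ℂ} (hA : A.PosSemidef) :
    (msqrt A).PosSemidef := by
  rw [msqrt_eq hA]; exact Matrix.nonneg_iff_posSemidef.mp (CFC.sqrt_nonneg A)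

open scoped MatrixOrder in
lemma msqrt_mul_self {n : ℕ} {A : Matrix (Fin n) (Fin n) ℂ} (hA : A.PosSemidef) :
    msqrt A * msqrt A = A := by
  rw [msqrt_eq hA]; exact CFC.sqrt_mul_sqrt_self A hA.nonneg

lemma msqrt_herm {n : ℕ} {A : Matrix (Fin n) (Fin n) ℂ} (hA : A.PosSemidef) :
    (msqrt A)ᴴ = msqrt A := (msqrt_posSemidef hA).1

open scoped MatrixOrder in
/-- uniqueness of the PSD square root -/
lemma msqrt_unique {n : ℕ} {A B : Matrix (Fin n) (Fin n) ℂ} (hB : B.PosSemidef)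
    (h : B * B = A) : msqrt A = B := by
  have hA : A.PosSemidef := by
    rw [← h]; nth_rewrite 1 [← hB.1]; exact Matrix.posSemidef_conjTranspose_mul_self B
  rw [msqrt_eq hA]
  exact CFC.sqrt_unique h hB.nonneg


lemma exists_unitary_polar {N : ℕ} (M : Matrix (Fin N) (Fin N) ℂ) :
    ∃ U : Matrix (Fin N) (Fin N) ℂ, U ∈ Matrix.unitaryGroup (Fin N) ℂ ∧
      M = U * msqrt (Mᴴ * M) := by
  have h : (Mᴴ * M).PosSemidef := Matrix.posSemidef_conjTranspose_mul_self M
  have hH : (Mᴴ * M).IsHermitian := h.1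
  set V : Matrix (Fin N) (Fin N) ℂ := (hH.eigenvectorUnitary : Matrix (Fin N) (Fin N) ℂ) with hV
  have hVmem : V ∈ Matrix.unitaryGroup (Fin N) ℂ := hH.eigenvectorUnitary.2
  have hVV : Vᴴ * V = 1 := by
    rw [← Matrix.star_eq_conjTranspose]; exact Matrix.mem_unitaryGroup_iff'.mp hVmem
  have hVV' : V * Vᴴ = 1 := by
    rw [← Matrix.star_eq_conjTranspose]; exact Matrix.mem_unitaryGroup_iff.mp hVmem
  set lam : Fin N → ℝ := hH.eigenvalues with hlam
  have hlam0 : ∀ i, 0 ≤ lam i := h.eigenvalues_nonneg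
  set d : Fin N → ℝ := fun i => Real.sqrt (lam i) with hd
  have hspec : Mᴴ * M = V * Matrix.diagonal (fun i => (lam i : ℂ)) * Vᴴ := by
    have := hH.spectral_theorem
    rw [Unitary.conjStarAlgAut_apply, Matrix.star_eq_conjTranspose] at this
    exact this
  have hmsqrt : msqrt (Mᴴ * M) = V * Matrix.diagonal (fun i => (d i : ℂ)) * Vᴴ := by
    rw [msqrt, dif_pos hH]
  set Nm : Matrix (Fin N) (Fin N) ℂ := M * V with hNm
  have hNN : Nmᴴ * Nm = Matrix.diagonal (fun i => (lam i : ℂ)) := by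
    rw [hNm, Matrix.conjTranspose_mul]
    calc Vᴴ * Mᴴ * (M * V) = Vᴴ * (Mᴴ * M) * V := by noncomm_ring
    _ = Vᴴ * V * Matrix.diagonal (fun i => (lam i : ℂ)) * (Vᴴ * V) := by rw [hspec]; noncomm_ring
    _ = _ := by rw [hVV]; simp
  have hcol : ∀ i j, (∑ k, (starRingEnd ℂ) (Nm k i) * Nm k j)
      = if i = j then (lam i : ℂ) else 0 := by
    intro i j
    have := congrFun (congrFun hNN i) j
    simpa [Matrix.mul_apply, Matrix.conjTranspose_apply, Matrix.diagonal_apply] using this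
  -- columns with lam i = 0 vanish
  have hzerocol : ∀ i, lam i = 0 → ∀ k, Nm k i = 0 := by
    intro i hi k
    have h0 : (∑ k, (starRingEnd ℂ) (Nm k i) * Nm k i) = 0 := by
      rw [hcol i i]; simp [hi]
    have h0' : (∑ k, (Complex.normSq (Nm k i) : ℂ)) = 0 := by
      rw [← h0]; congr 1; ext k; rw [Complex.normSq_eq_conj_mul_self]
    have h0'' : (∑ k, Complex.normSq (Nm k i)) = 0 := by
      have := congrArg Complex.re h0'
      simpa using this
    have := (Finset.sum_eq_zero_iff_of_nonneg (fun k _ => Complex.normSq_nonneg _)).mp h0''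
      k (Finset.mem_univ k)
    exact Complex.normSq_eq_zero.mp this
  -- the orthonormal family
  set v : Fin N → EuclideanSpace ℂ (Fin N) :=
    fun i => ((d i : ℂ))⁻¹ • ((WithLp.equiv 2 _).symm (fun k => Nm k i)) with hv
  set s : Set (Fin N) := {i | lam i ≠ 0} with hs
  have hds : ∀ i ∈ s, d i ≠ 0 := by
    intro i hi
    exact Real.sqrt_ne_zero'.mpr (lt_of_le_of_ne (hlam0 i) (Ne.symm hi))
  have hinner : ∀ i j, (inner ℂ (v i) (v j) : ℂ)
      = ((d i : ℂ))⁻¹ * ((d j : ℂ))⁻¹ * (if i = j then (lam i : ℂ) else 0) := by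
    intro i j
    rw [← hcol i j]
    simp only [hv, inner_smul_left, inner_smul_right, PiLp.inner_apply, RCLike.inner_apply,
      WithLp.equiv_symm_apply, PiLp.toLp_apply, map_inv₀, Complex.conj_ofReal]
    rw [Finset.sum_congr rfl fun x _ => mul_comm (Nm x j) _]
    ring
  have horth : Orthonormal ℂ (s.restrict v) := by
    rw [orthonormal_iff_ite]
    intro i j
    have := hinner i j
    by_cases hij : (i : Fin N) = j
    · have : i = j := Subtype.ext hij
      subst this
      change inner ℂ (v i) (v i) = _
      simp only [Set.restrict_apply, hinner, if_pos rfl, if_pos rfl]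
      have hdi := hds i i.2
      have hdd : ((d i : ℝ) : ℂ) ≠ 0 := by exact_mod_cast hdi
      have hll : ((lam i : ℝ) : ℂ) = (d i : ℂ) * (d i : ℂ) := by
        rw [← Complex.ofReal_mul, Real.mul_self_sqrt (hlam0 i)]
      rw [hll]
      field_simp
      simp
    · have hij' : i ≠ j := fun hc => hij (congrArg _ hc)
      change inner ℂ (v i) (v j) = _
      simp only [Set.restrict_apply, hinner, if_neg hij, if_neg hij']
      simp
  obtain ⟨b, hb⟩ := horth.exists_orthonormalBasis_extension_of_card_eq
    (by simp) 
  set W : Matrix (Fin N) (Fin N) ℂ := Matrix.of (fun k i => b i k) with hW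
  have hWmem : W ∈ Matrix.unitaryGroup (Fin N) ℂ := by
    rw [Matrix.mem_unitaryGroup_iff']
    ext i j
    have := (orthonormal_iff_ite.mp b.orthonormal) i j
    simp only [PiLp.inner_apply, RCLike.inner_apply] at this
    simp only [Matrix.mul_apply, Matrix.star_apply, Matrix.one_apply, hW, Matrix.of_apply,
      RCLike.star_def]
    rw [← this]; exact Finset.sum_congr rfl (fun _ _ => mul_comm _ _)
  have hWD : W * Matrix.diagonal (fun i => (d i : ℂ)) = Nm := by
    ext k i
    rw [Matrix.mul_diagonal]
    by_cases hi : i ∈ s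
    · have : W k i = ((d i : ℂ))⁻¹ * Nm k i := by
        rw [hW]
        show (b i) k = _
        rw [hb i hi]
        simp [hv, WithLp.equiv_symm_apply, PiLp.toLp_apply]
      rw [this]
      have hdd : ((d i : ℝ) : ℂ) ≠ 0 := by exact_mod_cast hds i hi
      field_simp
    · have hlz : lam i = 0 := by simpa [hs] using hi
      rw [hzerocol i hlz k]
      simp [hd, hlz]
  refine ⟨W * Vᴴ, ?_, ?_⟩
  · refine mul_mem hWmem (Matrix.mem_unitaryGroup_iff.mpr ?_)
    rw [Matrix.star_eq_conjTranspose, Matrix.conjTranspose_conjTranspose]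
    exact hVV
  · rw [hmsqrt]
    calc M = Nm * Vᴴ := by rw [hNm, Matrix.mul_assoc, hVV', Matrix.mul_one]
    _ = W * Matrix.diagonal (fun i => (d i : ℂ)) * Vᴴ := by rw [hWD]
    _ = W * Vᴴ * (V * Matrix.diagonal (fun i => (d i : ℂ)) * Vᴴ) := by
        have h2 : Vᴴ * (V * Matrix.diagonal (fun i => (d i : ℂ)) * Vᴴ)
            = Matrix.diagonal (fun i => (d i : ℂ)) * Vᴴ := by
          rw [← Matrix.mul_assoc, ← Matrix.mul_assoc, hVV, Matrix.one_mul]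
        rw [Matrix.mul_assoc W Vᴴ, h2, ← Matrix.mul_assoc]


/-- Norm preservation under unitary. -/
lemma unitary_inner_self {N : ℕ} {C : Matrix (Fin N) (Fin N) ℂ}
    (hC : C ∈ Matrix.unitaryGroup (Fin N) ℂ) (x : Fin N → ℂ) :
    (∑ j, (starRingEnd ℂ) ((C *ᵥ x) j) * (C *ᵥ x) j) = ∑ j, (starRingEnd ℂ) (x j) * x j := by
  have hCC : Cᴴ * C = 1 := by
    rw [← Matrix.star_eq_conjTranspose]; exact Matrix.mem_unitaryGroup_iff'.mp hC
  have : (∑ j, (starRingEnd ℂ) ((C *ᵥ x) j) * (C *ᵥ x) j)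
      = star (C *ᵥ x) ⬝ᵥ (C *ᵥ x) := by
    simp [dotProduct, Pi.star_apply, RCLike.star_def]
  rw [this, Matrix.star_mulVec, Matrix.dotProduct_mulVec, Matrix.vecMul_vecMul,
    ← Matrix.vecMul_one (star x)]
  rw [show (star x) ᵥ* 1 ᵥ* (Cᴴ * C) = (star x) ᵥ* (Cᴴ * C) by rw [Matrix.vecMul_one], hCC,
    Matrix.vecMul_one]
  simp [dotProduct, Pi.star_apply, RCLike.star_def]

lemma re_trace_unitary_mul_le {N : ℕ} (Q M : Matrix (Fin N) (Fin N) ℂ)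
    (hQ : Q ∈ Matrix.unitaryGroup (Fin N) ℂ) :
    ((Q * M).trace).re ≤ ((msqrt (Mᴴ * M)).trace).re := by
  obtain ⟨U, hU, hM⟩ := exists_unitary_polar M
  set P := msqrt (Mᴴ * M) with hP
  have hPpsd : P.PosSemidef := msqrt_posSemidef (Matrix.posSemidef_conjTranspose_mul_self M)
  set R := msqrt P with hR
  have hRpsd : R.PosSemidef := msqrt_posSemidef hPpsd
  have hRR : R * R = P := msqrt_mul_self hPpsd
  set C := Q * U with hC
  have hCmem : C ∈ Matrix.unitaryGroup (Fin N) ℂ := mul_mem hQ hU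
  have htr : (Q * M).trace = (R * C * R).trace := by
    rw [hM, ← Matrix.mul_assoc, ← hC, ← hRR]
    rw [show C * (R * R) = (C * R) * R by noncomm_ring, Matrix.trace_mul_comm, ← Matrix.mul_assoc]
  rw [htr, ← hRR]
  rw [Matrix.trace, Matrix.trace]
  rw [Complex.re_sum, Complex.re_sum]
  apply Finset.sum_le_sum
  intro i _
  -- compare diagonal entries
  set x : EuclideanSpace ℂ (Fin N) := (WithLp.equiv 2 _).symm (fun j => R j i) with hx
  have hRsym : ∀ a b, R a b = (starRingEnd ℂ) (R b a) := by
    intro a b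
    have := hRpsd.1
    rw [Matrix.IsHermitian] at this
    conv_lhs => rw [← this]
    simp [Matrix.conjTranspose_apply, RCLike.star_def]
  have hentry : (R * C * R).diag i = (inner ℂ x ((WithLp.equiv 2 _).symm (C *ᵥ (fun j => R j i))) : ℂ) := by
    simp only [Matrix.diag_apply, Matrix.mul_apply, PiLp.inner_apply, RCLike.inner_apply,
      WithLp.equiv_symm_apply, PiLp.toLp_apply, Matrix.mulVec, dotProduct, hx]
    simp only [Finset.sum_mul, Finset.mul_sum]
    rw [Finset.sum_comm]
    refine Finset.sum_congr rfl fun j _ => Finset.sum_congr rfl fun k _ => ?_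
    rw [← hRsym i j]; ring
  have hentry2 : (R * R).diag i = (inner ℂ x x : ℂ) := by
    simp only [Matrix.diag_apply, Matrix.mul_apply, PiLp.inner_apply, RCLike.inner_apply,
      WithLp.equiv_symm_apply, PiLp.toLp_apply, hx]
    refine Finset.sum_congr rfl fun j _ => ?_
    rw [← hRsym i j]; ring
  set y : EuclideanSpace ℂ (Fin N) := (WithLp.equiv 2 _).symm (C *ᵥ (fun j => R j i)) with hy
  have hnorm : ‖y‖ = ‖x‖ := by
    rw [norm_eq_sqrt_re_inner (𝕜 := ℂ), norm_eq_sqrt_re_inner (𝕜 := ℂ)]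
    congr 1
    have : (inner ℂ y y : ℂ) = inner ℂ x x := by
      simp only [PiLp.inner_apply, RCLike.inner_apply, WithLp.equiv_symm_apply, PiLp.toLp_apply, hy, hx]
      simpa only [mul_comm ((starRingEnd ℂ) _)] using unitary_inner_self hCmem (fun j => R j i)
    rw [this]
  calc ((R * C * R).diag i).re = RCLike.re (inner ℂ x y : ℂ) := by rw [hentry]; rfl
    _ ≤ ‖x‖ * ‖y‖ := re_inner_le_norm x y
    _ = ‖x‖ ^ 2 := by rw [hnorm]; ring
    _ = RCLike.re (inner ℂ x x : ℂ) := (inner_self_eq_norm_sq x).symm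
    _ = ((R * R).diag i).re := by rw [hentry2]; rfl


section blocks
variable {k : ℕ}

local notation "e" => (finSumFinEquiv : Fin _ ⊕ Fin _ ≃ Fin _)

noncomputable def RB (X : Matrix (Fin k ⊕ Fin k) (Fin k ⊕ Fin k) ℂ) :
    Matrix (Fin (k + k)) (Fin (k + k)) ℂ :=
  Matrix.reindex e e X

lemma rb_mul (X Y : Matrix (Fin k ⊕ Fin k) (Fin k ⊕ Fin k) ℂ) :
    RB X * RB Y = RB (X * Y) := by
  simp only [RB, Matrix.reindex_apply]
  exact Matrix.submatrix_mul_equiv X Y _ _ _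

lemma rb_conjT (X : Matrix (Fin k ⊕ Fin k) (Fin k ⊕ Fin k) ℂ) :
    (RB X)ᴴ = RB Xᴴ := by
  simp only [RB, Matrix.reindex_apply, Matrix.conjTranspose_submatrix]

lemma rb_trace (X : Matrix (Fin k ⊕ Fin k) (Fin k ⊕ Fin k) ℂ) :
    (RB X).trace = X.trace := by
  simp only [RB, Matrix.reindex_apply, Matrix.trace, Matrix.diag_apply, Matrix.submatrix_apply]
  exact Fintype.sum_equiv finSumFinEquiv.symm _ _ (fun i => rfl)

lemma rb_psd {X : Matrix (Fin k ⊕ Fin k) (Fin k ⊕ Fin k) ℂ} (hX : X.PosSemidef) :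
    (RB X).PosSemidef := by
  simpa only [RB, Matrix.reindex_apply] using
    (Matrix.posSemidef_submatrix_equiv finSumFinEquiv.symm).mpr hX

lemma trace_fb (A D : Matrix (Fin k) (Fin k) ℂ) (B C : Matrix (Fin k) (Fin k) ℂ) :
    (Matrix.fromBlocks A B C D).trace = A.trace + D.trace := by
  simp [Matrix.trace, Fintype.sum_sum_type, Matrix.fromBlocks]

lemma psd_fb_zero {A : Matrix (Fin k) (Fin k) ℂ} (hA : A.PosSemidef) :
    (Matrix.fromBlocks A 0 0 (0 : Matrix (Fin k) (Fin k) ℂ)).PosSemidef := by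
  refine .of_dotProduct_mulVec_nonneg ?_ ?_
  · rw [Matrix.IsHermitian, Matrix.fromBlocks_conjTranspose]
    simp [hA.1.eq]
  · intro x
    have := hA.dotProduct_mulVec_nonneg (fun i => x (Sum.inl i))
    simpa [Matrix.fromBlocks_mulVec, dotProduct, Fintype.sum_sum_type, Function.comp_def] using this

lemma msqrt_rb_fb {A : Matrix (Fin k) (Fin k) ℂ} (hA : A.PosSemidef) :
    msqrt (RB (Matrix.fromBlocks A 0 0 0)) = RB (Matrix.fromBlocks (msqrt A) 0 0 0) := by
  apply msqrt_unique (rb_psd (psd_fb_zero (msqrt_posSemidef hA)))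
  rw [rb_mul]
  congr 1
  rw [Matrix.fromBlocks_multiply]
  simp [msqrt_mul_self hA]
end blocks


lemma conjT_mem_unitary {N : ℕ} {U : Matrix (Fin N) (Fin N) ℂ}
    (hU : U ∈ Matrix.unitaryGroup (Fin N) ℂ) : Uᴴ ∈ Matrix.unitaryGroup (Fin N) ℂ := by
  rw [Matrix.mem_unitaryGroup_iff, Matrix.star_eq_conjTranspose,
    Matrix.conjTranspose_conjTranspose]
  rw [← Matrix.star_eq_conjTranspose]
  exact Matrix.mem_unitaryGroup_iff'.mp hU

lemma block_bound {k : ℕ} (A B Y : Matrix (Fin k) (Fin k) ℂ)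
    (hA : A.PosSemidef) (hB : B.PosSemidef)
    (hP : (RB (Matrix.fromBlocks A Y Yᴴ B)).PosSemidef) :
    Y.trace.re ≤ fidelity A B := by
  set P := RB (Matrix.fromBlocks A Y Yᴴ B) with hPdef
  set S := msqrt P with hS
  have hSS : S * S = P := msqrt_mul_self hP
  have hSH : Sᴴ = S := msqrt_herm hP
  set J₁ := RB (Matrix.fromBlocks (1 : Matrix (Fin k) (Fin k) ℂ) 0 0 0) with hJ₁
  set J₂ := RB (Matrix.fromBlocks (0 : Matrix (Fin k) (Fin k) ℂ) 0 1 0) with hJ₂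
  set M₁ := S * J₁ with hM₁
  set M₂ := S * J₂ with hM₂
  have hJ₁H : J₁ᴴ = J₁ := by
    rw [hJ₁, rb_conjT, Matrix.fromBlocks_conjTranspose]; simp
  have hJ₂H : J₂ᴴ = RB (Matrix.fromBlocks (0 : Matrix (Fin k) (Fin k) ℂ) 1 0 0) := by
    rw [hJ₂, rb_conjT, Matrix.fromBlocks_conjTranspose]; simp
  have hM₁M₁ : M₁ᴴ * M₁ = RB (Matrix.fromBlocks A 0 0 0) := by
    rw [hM₁, Matrix.conjTranspose_mul, hSH, hJ₁H, Matrix.mul_assoc, ← Matrix.mul_assoc S S,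
      hSS, hJ₁, rb_mul, rb_mul, Matrix.fromBlocks_multiply, Matrix.fromBlocks_multiply]
    simp
  have hM₂M₂ : M₂ᴴ * M₂ = RB (Matrix.fromBlocks B 0 0 0) := by
    rw [hM₂, Matrix.conjTranspose_mul, hSH, hJ₂H, Matrix.mul_assoc, ← Matrix.mul_assoc S S,
      hSS, hJ₂, rb_mul, rb_mul, Matrix.fromBlocks_multiply, Matrix.fromBlocks_multiply]
    simp
  have hM₁M₂ : M₁ᴴ * M₂ = RB (Matrix.fromBlocks Y 0 0 0) := by
    rw [hM₁, hM₂, Matrix.conjTranspose_mul, hSH, hJ₁H, Matrix.mul_assoc, ← Matrix.mul_assoc S S,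
      hSS, hJ₁, hJ₂, rb_mul, rb_mul, Matrix.fromBlocks_multiply, Matrix.fromBlocks_multiply]
    simp
  obtain ⟨U₁, hU₁, hpol₁⟩ := exists_unitary_polar M₁
  obtain ⟨U₂, hU₂, hpol₂⟩ := exists_unitary_polar M₂
  rw [hM₁M₁, msqrt_rb_fb hA] at hpol₁
  rw [hM₂M₂, msqrt_rb_fb hB] at hpol₂
  set P₁ := RB (Matrix.fromBlocks (msqrt A) 0 0 0) with hP₁
  set P₂ := RB (Matrix.fromBlocks (msqrt B) 0 0 0) with hP₂
  have hP₁H : P₁ᴴ = P₁ := by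
    rw [hP₁, rb_conjT, Matrix.fromBlocks_conjTranspose, msqrt_herm hA]; simp
  have htr : Y.trace = (U₁ᴴ * U₂ * (P₂ * P₁)).trace := by
    have : M₁ᴴ * M₂ = P₁ * (U₁ᴴ * U₂ * P₂) := by
      rw [hpol₁, hpol₂, Matrix.conjTranspose_mul, hP₁H]
      noncomm_ring
    calc Y.trace = (RB (Matrix.fromBlocks Y 0 0 0)).trace := by
          rw [rb_trace, trace_fb]; simp
      _ = (M₁ᴴ * M₂).trace := by rw [hM₁M₂]
      _ = (P₁ * (U₁ᴴ * U₂ * P₂)).trace := by rw [this]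
      _ = (U₁ᴴ * U₂ * P₂ * P₁).trace := Matrix.trace_mul_comm _ _
      _ = _ := by rw [Matrix.mul_assoc]
  have hC : U₁ᴴ * U₂ ∈ Matrix.unitaryGroup (Fin (k+k)) ℂ :=
    mul_mem (conjT_mem_unitary hU₁) hU₂
  have key := re_trace_unitary_mul_le (U₁ᴴ * U₂) (P₂ * P₁) hC
  rw [htr]
  refine key.trans_eq ?_
  -- compute msqrt ((P₂P₁)ᴴ (P₂P₁))
  have hG : (P₂ * P₁)ᴴ * (P₂ * P₁) = RB (Matrix.fromBlocks (msqrt A * B * msqrt A) 0 0 0) := by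
    have hP₂H : P₂ᴴ = P₂ := by
      rw [hP₂, rb_conjT, Matrix.fromBlocks_conjTranspose, msqrt_herm hB]; simp
    rw [Matrix.conjTranspose_mul, hP₁H, hP₂H]
    rw [show P₁ * P₂ * (P₂ * P₁) = P₁ * (P₂ * P₂) * P₁ by noncomm_ring]
    rw [hP₁, hP₂, rb_mul, Matrix.fromBlocks_multiply, rb_mul, Matrix.fromBlocks_multiply,
      rb_mul, Matrix.fromBlocks_multiply]
    simp [msqrt_mul_self hB, Matrix.mul_assoc]
  have hpsd : (msqrt A * B * msqrt A).PosSemidef := by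
    have := hB.mul_mul_conjTranspose_same (msqrt A)
    rwa [msqrt_herm hA] at this
  rw [hG, msqrt_rb_fb hpsd, rb_trace, trace_fb]
  simp [fidelity]


lemma rb_fb_sum {k m : ℕ} (a b c d : Fin m → Matrix (Fin k) (Fin k) ℂ) :
    (∑ i, RB (Matrix.fromBlocks (a i) (b i) (c i) (d i)))
      = RB (Matrix.fromBlocks (∑ i, a i) (∑ i, b i) (∑ i, c i) (∑ i, d i)) := by
  ext p q
  simp only [RB, Matrix.reindex_apply, Matrix.submatrix_apply, Matrix.sum_apply]
  cases finSumFinEquiv.symm p <;> cases finSumFinEquiv.symm q <;>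
    simp [Matrix.fromBlocks, Matrix.sum_apply]

set_option maxHeartbeats 2000000 in

set_option maxHeartbeats 2000000 in
/-- Fidelity is monotone non-decreasing under CPTP maps (given here in Kraus form:
`ℛ(ρ) = ∑ᵢ Kᵢ ρ Kᵢᴴ` with `∑ᵢ Kᵢᴴ Kᵢ = 1`, which characterizes completely positive
trace-preserving maps): `F(ℛ(σ₀), ℛ(σ₁)) ≥ F(σ₀, σ₁)`. -/
theorem fidelity_monotone_cptp {n m : ℕ} (K : Fin m → Matrix (Fin n) (Fin n) ℂ)
    (hK : ∑ i, (K i)ᴴ * K i = 1)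
    (σ₀ σ₁ : Matrix (Fin n) (Fin n) ℂ)
    (h₀ : σ₀.PosSemidef) (h₁ : σ₁.PosSemidef)
    (ht₀ : σ₀.trace = 1) (ht₁ : σ₁.trace = 1) :
    fidelity σ₀ σ₁ ≤ fidelity (∑ i, K i * σ₀ * (K i)ᴴ) (∑ i, K i * σ₁ * (K i)ᴴ) := by

  -- notation
  set τ₀ := ∑ i, K i * σ₀ * (K i)ᴴ with hτ₀
  set τ₁ := ∑ i, K i * σ₁ * (K i)ᴴ with hτ₁
  have hτ₀psd : τ₀.PosSemidef := by
    rw [hτ₀]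
    apply Finset.sum_induction _ _ (fun a b ha hb => ha.add hb) Matrix.PosSemidef.zero
    exact fun i _ => h₀.mul_mul_conjTranspose_same (K i)
  have hτ₁psd : τ₁.PosSemidef := by
    rw [hτ₁]
    apply Finset.sum_induction _ _ (fun a b ha hb => ha.add hb) Matrix.PosSemidef.zero
    exact fun i _ => h₁.mul_mul_conjTranspose_same (K i)
  -- trace preservation
  have htp : ∀ X : Matrix (Fin n) (Fin n) ℂ, (∑ i, K i * X * (K i)ᴴ).trace = X.trace := by
    intro X
    rw [Matrix.trace_sum]
    have : ∀ i : Fin m, (K i * X * (K i)ᴴ).trace = ((K i)ᴴ * (K i) * X).trace := by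
      intro i
      rw [Matrix.trace_mul_cycle, Matrix.mul_assoc]
    simp_rw [this]
    rw [← Matrix.trace_sum, ← Finset.sum_mul, hK, Matrix.one_mul]
  -- polar decomposition of msqrt σ₁ * msqrt σ₀
  set Nmat := msqrt σ₁ * msqrt σ₀ with hNmat
  obtain ⟨W, hW, hpol⟩ := exists_unitary_polar Nmat
  have hWW : Wᴴ * W = 1 := by
    rw [← Matrix.star_eq_conjTranspose]; exact Matrix.mem_unitaryGroup_iff'.mp hW
  have hWW' : W * Wᴴ = 1 := by
    rw [← Matrix.star_eq_conjTranspose]; exact Matrix.mem_unitaryGroup_iff.mp hW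
  have hNN : Nmatᴴ * Nmat = msqrt σ₀ * σ₁ * msqrt σ₀ := by
    rw [hNmat, Matrix.conjTranspose_mul, msqrt_herm h₀, msqrt_herm h₁]
    rw [show msqrt σ₀ * msqrt σ₁ * (msqrt σ₁ * msqrt σ₀)
        = msqrt σ₀ * (msqrt σ₁ * msqrt σ₁) * msqrt σ₀ by noncomm_ring, msqrt_mul_self h₁]
  set X := msqrt σ₀ * Wᴴ * msqrt σ₁ with hX
  have h2 : Wᴴ * Nmat = msqrt (Nmatᴴ * Nmat) := by
    nth_rewrite 1 [hpol]
    rw [← Matrix.mul_assoc, hWW, Matrix.one_mul]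
  have hXtr : X.trace = (msqrt (Nmatᴴ * Nmat)).trace := by
    conv_lhs => rw [hX, Matrix.trace_mul_cycle, ← hNmat, Matrix.trace_mul_comm, h2]
  have hfid : fidelity σ₀ σ₁ = X.trace.re := by
    rw [hXtr, fidelity, hNN]
  -- block positivity
  set L := RB (Matrix.fromBlocks (msqrt σ₀) (Wᴴ * msqrt σ₁) 0 0) with hL
  have hXH : Xᴴ = msqrt σ₁ * W * msqrt σ₀ := by
    rw [hX, Matrix.conjTranspose_mul, Matrix.conjTranspose_mul, msqrt_herm h₀, msqrt_herm h₁,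
      Matrix.conjTranspose_conjTranspose, Matrix.mul_assoc]
  have hblock : RB (Matrix.fromBlocks σ₀ X Xᴴ σ₁) = Lᴴ * L := by
    rw [hL, rb_conjT, Matrix.fromBlocks_conjTranspose, rb_mul, Matrix.fromBlocks_multiply]
    have h11 : (msqrt σ₀)ᴴ * msqrt σ₀ + (0 : Matrix (Fin n) (Fin n) ℂ)ᴴ * 0 = σ₀ := by
      rw [msqrt_herm h₀, msqrt_mul_self h₀]; simp
    have h12 : (msqrt σ₀)ᴴ * (Wᴴ * msqrt σ₁) + (0 : Matrix (Fin n) (Fin n) ℂ)ᴴ * 0 = X := by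
      rw [msqrt_herm h₀, hX, Matrix.mul_assoc]; simp
    have h21 : (Wᴴ * msqrt σ₁)ᴴ * msqrt σ₀ + (0 : Matrix (Fin n) (Fin n) ℂ)ᴴ * 0 = Xᴴ := by
      rw [Matrix.conjTranspose_mul, Matrix.conjTranspose_conjTranspose, msqrt_herm h₁, hXH]
      simp [Matrix.mul_assoc]
    have h22 : (Wᴴ * msqrt σ₁)ᴴ * (Wᴴ * msqrt σ₁) + (0 : Matrix (Fin n) (Fin n) ℂ)ᴴ * 0 = σ₁ := by
      rw [Matrix.conjTranspose_mul, Matrix.conjTranspose_conjTranspose, msqrt_herm h₁]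
      rw [show msqrt σ₁ * W * (Wᴴ * msqrt σ₁) = msqrt σ₁ * (W * Wᴴ) * msqrt σ₁ by noncomm_ring,
        hWW', Matrix.mul_one, msqrt_mul_self h₁]
      simp
    rw [h11, h12, h21, h22]
  have hPpsd : (RB (Matrix.fromBlocks σ₀ X Xᴴ σ₁)).PosSemidef := by
    rw [hblock]; exact Matrix.posSemidef_conjTranspose_mul_self L
  -- apply the channel blockwise
  set RX := ∑ i, K i * X * (K i)ᴴ with hRX
  have hRXH : RXᴴ = ∑ i, K i * Xᴴ * (K i)ᴴ := by
    rw [hRX, Matrix.conjTranspose_sum]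
    refine Finset.sum_congr rfl fun i _ => ?_
    rw [Matrix.conjTranspose_mul, Matrix.conjTranspose_mul, Matrix.conjTranspose_conjTranspose,
      Matrix.mul_assoc]
  have hQ : RB (Matrix.fromBlocks τ₀ RX RXᴴ τ₁)
      = ∑ i, (RB (Matrix.fromBlocks (K i) 0 0 (K i))) * RB (Matrix.fromBlocks σ₀ X Xᴴ σ₁)
          * (RB (Matrix.fromBlocks (K i) 0 0 (K i)))ᴴ := by
    have : ∀ i : Fin m, (RB (Matrix.fromBlocks (K i) 0 0 (K i)))
        * RB (Matrix.fromBlocks σ₀ X Xᴴ σ₁) * (RB (Matrix.fromBlocks (K i) 0 0 (K i)))ᴴ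
        = RB (Matrix.fromBlocks (K i * σ₀ * (K i)ᴴ) (K i * X * (K i)ᴴ)
            (K i * Xᴴ * (K i)ᴴ) (K i * σ₁ * (K i)ᴴ)) := by
      intro i
      rw [rb_conjT, Matrix.fromBlocks_conjTranspose, rb_mul, Matrix.fromBlocks_multiply,
        rb_mul, Matrix.fromBlocks_multiply]
      simp [Matrix.mul_assoc]
    simp_rw [this]
    rw [rb_fb_sum, ← hτ₀, ← hτ₁, ← hRX, ← hRXH]
  have hQpsd : (RB (Matrix.fromBlocks τ₀ RX RXᴴ τ₁)).PosSemidef := by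
    rw [hQ]
    apply Finset.sum_induction _ _ (fun a b ha hb => ha.add hb) Matrix.PosSemidef.zero
    exact fun i _ => hPpsd.mul_mul_conjTranspose_same _
  have hfinal := block_bound τ₀ τ₁ RX hτ₀psd hτ₁psd hQpsd
  rw [hfid, show X.trace = RX.trace from (htp X).symm]
  exact hfinal
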